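/- Covariance intersection inequality for two matrices: if P_1, P_2 are symmetric positive definite n×n matrices, a ∈ [0,1], and x_1, x_2 ∈ R^n, then (a P_1^{-1} + (1-a) P_2^{-1}) is positive definite and the fused vector x = (a P_1^{-1} + (1-a) P_2^{-1})^{-1}(a P_1^{-1} x_1 + (1-a) P_2^{-1} x_2) satisfies (x - z)(x - z)^T-consistency: for any z, if (x_1 - z)(x_1 - z)^T ≤ P_1 and (x_2 - z)(x_2 - z)^T ≤ P_2, then (x - z)(x - z)^T ≤ (a P_1^{-1} + (1-a) P_2^{-1})^{-1}. -/

import Mathlib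

open Matrix

private lemma dot_vecMulVec_mulVec {n : ℕ} (x y v w : Fin n → ℝ) :
    v ⬝ᵥ (vecMulVec x y) *ᵥ w = (v ⬝ᵥ x) * (y ⬝ᵥ w) := by
  simp only [dotProduct, mulVec, vecMulVec_apply, Finset.mul_sum, Finset.sum_mul]
  rw [Finset.sum_comm]
  congr 1; ext i; congr 1; ext j; ring

private lemma herm_dot_comm {n : ℕ} {A : Matrix (Fin n) (Fin n) ℝ} (hA : A.IsHermitian)
    (v w : Fin n → ℝ) : v ⬝ᵥ A *ᵥ w = w ⬝ᵥ A *ᵥ v := by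
  have ht : Aᵀ = A := by
    ext i j
    simpa using congrFun (congrFun hA.eq i) j
  rw [dotProduct_mulVec, ← mulVec_transpose, ht, dotProduct_comm]

private lemma psd_cauchy_schwarz {n : ℕ} {A : Matrix (Fin n) (Fin n) ℝ} (hA : A.PosSemidef)
    (v w : Fin n → ℝ) : (v ⬝ᵥ A *ᵥ w) ^ 2 ≤ (v ⬝ᵥ A *ᵥ v) * (w ⬝ᵥ A *ᵥ w) := by
  have key : ∀ t : ℝ, 0 ≤ (w ⬝ᵥ A *ᵥ w) * (t * t) + (2 * (v ⬝ᵥ A *ᵥ w)) * t + (v ⬝ᵥ A *ᵥ v) := by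
    intro t
    have h := hA.dotProduct_mulVec_nonneg (v + t • w)
    rw [star_trivial] at h
    have hsym := herm_dot_comm hA.1 w v
    calc (0:ℝ) ≤ (v + t • w) ⬝ᵥ A *ᵥ (v + t • w) := h
      _ = (w ⬝ᵥ A *ᵥ w) * (t * t) + (2 * (v ⬝ᵥ A *ᵥ w)) * t + (v ⬝ᵥ A *ᵥ v) := by
          simp only [mulVec_add, dotProduct_add, add_dotProduct, smul_dotProduct,
            mulVec_smul, dotProduct_smul, smul_eq_mul]
          rw [hsym]; ring
  have hd : discrim (w ⬝ᵥ A *ᵥ w) (2 * (v ⬝ᵥ A *ᵥ w)) (v ⬝ᵥ A *ᵥ v) ≤ 0 :=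
    discrim_le_zero key
  rw [discrim] at hd
  nlinarith [hd]

private lemma pd_smul {n : ℕ} {A : Matrix (Fin n) (Fin n) ℝ} (hA : A.PosDef)
    {c : ℝ} (hc : 0 < c) : (c • A).PosDef := by
  refine Matrix.PosDef.of_dotProduct_mulVec_pos ?_ fun x hx => ?_
  · unfold Matrix.IsHermitian
    rw [conjTranspose_smul, hA.1.eq]
    simp
  · rw [star_trivial, smul_mulVec, dotProduct_smul, smul_eq_mul]
    exact mul_pos hc (by simpa using hA.dotProduct_mulVec_pos hx)

private lemma psd_smul {n : ℕ} {A : Matrix (Fin n) (Fin n) ℝ} (hA : A.PosSemidef)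
    {c : ℝ} (hc : 0 ≤ c) : (c • A).PosSemidef := by
  refine Matrix.PosSemidef.of_dotProduct_mulVec_nonneg ?_ fun x => ?_
  · unfold Matrix.IsHermitian
    rw [conjTranspose_smul, hA.1.eq]
    simp
  · rw [star_trivial, smul_mulVec, dotProduct_smul, smul_eq_mul]
    exact mul_nonneg hc (by simpa using hA.dotProduct_mulVec_nonneg x)

/-- Covariance intersection inequality for two matrices: for positive definite
`P₁, P₂`, `a ∈ [0,1]` and any `x₁, x₂, z`, the matrix `a P₁⁻¹ + (1-a) P₂⁻¹` is
positive definite, and if `(x₁-z)(x₁-z)ᵀ ≤ P₁` and `(x₂-z)(x₂-z)ᵀ ≤ P₂` then the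
fused vector `x = (a P₁⁻¹ + (1-a) P₂⁻¹)⁻¹ (a P₁⁻¹ x₁ + (1-a) P₂⁻¹ x₂)` satisfies
`(x-z)(x-z)ᵀ ≤ (a P₁⁻¹ + (1-a) P₂⁻¹)⁻¹`. -/
theorem covariance_intersection_two {n : ℕ}
    (P₁ P₂ : Matrix (Fin n) (Fin n) ℝ) (hP₁ : P₁.PosDef) (hP₂ : P₂.PosDef)
    (a : ℝ) (ha0 : 0 ≤ a) (ha1 : a ≤ 1) (x₁ x₂ z : Fin n → ℝ) :
    (a • P₁⁻¹ + (1 - a) • P₂⁻¹).PosDef ∧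
    ((P₁ - vecMulVec (x₁ - z) (x₁ - z)).PosSemidef →
     (P₂ - vecMulVec (x₂ - z) (x₂ - z)).PosSemidef →
      ((a • P₁⁻¹ + (1 - a) • P₂⁻¹)⁻¹
        - vecMulVec
            ((a • P₁⁻¹ + (1 - a) • P₂⁻¹)⁻¹.mulVec
              (a • P₁⁻¹.mulVec x₁ + (1 - a) • P₂⁻¹.mulVec x₂) - z)
            ((a • P₁⁻¹ + (1 - a) • P₂⁻¹)⁻¹.mulVec
              (a • P₁⁻¹.mulVec x₁ + (1 - a) • P₂⁻¹.mulVec x₂) - z)).PosSemidef) := by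
  set Q : Matrix (Fin n) (Fin n) ℝ := a • P₁⁻¹ + (1 - a) • P₂⁻¹ with hQdef
  have hP₁i := hP₁.inv
  have hP₂i := hP₂.inv
  -- positive definiteness of Q
  have hQ : Q.PosDef := by
    rcases eq_or_lt_of_le ha0 with h0 | h0
    · have : Q = P₂⁻¹ := by rw [hQdef, ← h0]; simp
      rw [this]; exact hP₂i
    · exact Matrix.PosDef.add_posSemidef (pd_smul hP₁i h0)
        (psd_smul hP₂i.posSemidef (by linarith))
  refine ⟨hQ, fun h₁ h₂ => ?_⟩
  have hQi := hQ.inv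
  have hQQi : Q * Q⁻¹ = 1 := Matrix.mul_nonsing_inv _ (Matrix.isUnit_iff_isUnit_det _ |>.1 hQ.isUnit)
  have hQiQ : Q⁻¹ * Q = 1 := Matrix.nonsing_inv_mul _ (Matrix.isUnit_iff_isUnit_det _ |>.1 hQ.isUnit)
  set y₁ := x₁ - z with hy₁
  set y₂ := x₂ - z with hy₂
  set u : Fin n → ℝ := a • (P₁⁻¹ *ᵥ y₁) + (1 - a) • (P₂⁻¹ *ᵥ y₂) with hu
  set m : Fin n → ℝ := Q⁻¹ *ᵥ (a • P₁⁻¹ *ᵥ x₁ + (1 - a) • P₂⁻¹ *ᵥ x₂) - z with hm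
  have hQm : Q *ᵥ m = u := by
    rw [hm, mulVec_sub, mulVec_mulVec, hQQi, one_mulVec, hu]
    rw [hy₁, hy₂]
    simp only [hQdef, add_mulVec, smul_mulVec, mulVec_sub]
    module
  have hmz : m = Q⁻¹ *ᵥ u := by
    rw [← hQm, mulVec_mulVec, hQiQ, one_mulVec]
  -- bounds t_i ≤ 1
  have hbound : ∀ (P : Matrix (Fin n) (Fin n) ℝ) (y : Fin n → ℝ), P.PosDef →
      (P - vecMulVec y y).PosSemidef → y ⬝ᵥ P⁻¹ *ᵥ y ≤ 1 := by
    intro P y hP h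
    have hPPi : P * P⁻¹ = 1 := Matrix.mul_nonsing_inv _ (Matrix.isUnit_iff_isUnit_det _ |>.1 hP.isUnit)
    have hq := h.dotProduct_mulVec_nonneg (P⁻¹ *ᵥ y)
    rw [star_trivial, sub_mulVec, dotProduct_sub, dot_vecMulVec_mulVec] at hq
    have e1 : (P⁻¹ *ᵥ y) ⬝ᵥ P *ᵥ (P⁻¹ *ᵥ y) = y ⬝ᵥ P⁻¹ *ᵥ y := by
      rw [mulVec_mulVec, hPPi, one_mulVec, dotProduct_comm]
    have e2 : (P⁻¹ *ᵥ y) ⬝ᵥ y = y ⬝ᵥ P⁻¹ *ᵥ y := dotProduct_comm _ _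
    have e3 : y ⬝ᵥ (P⁻¹ *ᵥ y) = y ⬝ᵥ P⁻¹ *ᵥ y := rfl
    rw [e1, e2, e3] at hq
    nlinarith [hq]
  have ht₁ : y₁ ⬝ᵥ P₁⁻¹ *ᵥ y₁ ≤ 1 := hbound P₁ y₁ hP₁ h₁
  have ht₂ : y₂ ⬝ᵥ P₂⁻¹ *ᵥ y₂ ≤ 1 := hbound P₂ y₂ hP₂ h₂
  refine Matrix.PosSemidef.of_dotProduct_mulVec_nonneg (hQi.1.sub ?_) fun v => ?_
  · exact Matrix.IsHermitian.ext fun i j => by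
      simp [vecMulVec_apply, mul_comm]
  · rw [star_trivial, sub_mulVec, dotProduct_sub, dot_vecMulVec_mulVec, sub_nonneg, hmz]
    set w : Fin n → ℝ := Q⁻¹ *ᵥ v with hw
    have hv : v = Q *ᵥ w := by rw [hw, mulVec_mulVec, hQQi, one_mulVec]
    have hvQiv : v ⬝ᵥ Q⁻¹ *ᵥ v = w ⬝ᵥ Q *ᵥ w := by
      calc v ⬝ᵥ Q⁻¹ *ᵥ v = w ⬝ᵥ v := dotProduct_comm _ _
        _ = w ⬝ᵥ Q *ᵥ w := by conv_lhs => rw [hv]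
    have hvm : v ⬝ᵥ (Q⁻¹ *ᵥ u) = w ⬝ᵥ u := by
      rw [herm_dot_comm hQi.1 v u]
      exact dotProduct_comm _ _
    have hmv : (Q⁻¹ *ᵥ u) ⬝ᵥ v = w ⬝ᵥ u := by rw [dotProduct_comm]; exact hvm
    rw [hvQiv, hvm, hmv]
    -- scalar inequality
    set s₁ := w ⬝ᵥ P₁⁻¹ *ᵥ w
    set s₂ := w ⬝ᵥ P₂⁻¹ *ᵥ w
    set c₁ := w ⬝ᵥ P₁⁻¹ *ᵥ y₁
    set c₂ := w ⬝ᵥ P₂⁻¹ *ᵥ y₂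
    have hwu : w ⬝ᵥ u = a * c₁ + (1 - a) * c₂ := by
      rw [hu]
      simp only [dotProduct_add, dotProduct_smul, smul_eq_mul]
      rfl
    have hwQw : w ⬝ᵥ Q *ᵥ w = a * s₁ + (1 - a) * s₂ := by
      rw [hQdef]
      simp only [add_mulVec, smul_mulVec, dotProduct_add, dotProduct_smul, smul_eq_mul]
      rfl
    have hs₁ : 0 ≤ s₁ := by simpa using hP₁i.posSemidef.dotProduct_mulVec_nonneg w
    have hs₂ : 0 ≤ s₂ := by simpa using hP₂i.posSemidef.dotProduct_mulVec_nonneg w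
    have hcs₁ : c₁ ^ 2 ≤ s₁ * (y₁ ⬝ᵥ P₁⁻¹ *ᵥ y₁) := psd_cauchy_schwarz hP₁i.posSemidef w y₁
    have hcs₂ : c₂ ^ 2 ≤ s₂ * (y₂ ⬝ᵥ P₂⁻¹ *ᵥ y₂) := psd_cauchy_schwarz hP₂i.posSemidef w y₂
    have hc₁ : c₁ ^ 2 ≤ s₁ := by nlinarith [hcs₁, ht₁, hs₁]
    have hc₂ : c₂ ^ 2 ≤ s₂ := by nlinarith [hcs₂, ht₂, hs₂]
    rw [hwu, hwQw, ← sq]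
    nlinarith [sq_nonneg (c₁ - c₂), mul_nonneg ha0 (sub_nonneg.2 ha1)]
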